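/- Let w be a word representing a finite simple graph G. Orient each edge xy of G as x→y if the leftmost occurrence of x in w is to the left of the leftmost occurrence of y in w. Then this orientation of G is semi-transitive, and the vertex whose letter occurs first in w is a source of this orientation. -/

import Mathlib

namespace WordRepr

variable {V : Type*}

/-- Two letters `x` and `y` alternate in a word `w` if in the subsequence of `w`
formed by all occurrences of `x` and `y`, no two consecutive letters are equal. -/
def Alternates [DecidableEq V] (w : List V) (x y : V) : Prop :=
  List.Chain' (· ≠ ·) (w.filter fun z => decide (z = x ∨ z = y))

/-- A word `w` represents the graph `G` if every vertex occurs in `w`, and two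
distinct vertices alternate in `w` iff they are adjacent in `G`. -/
def Represents [DecidableEq V] (G : SimpleGraph V) (w : List V) : Prop :=
  (∀ v : V, v ∈ w) ∧ ∀ x y : V, x ≠ y → (Alternates w x y ↔ G.Adj x y)

/-- A graph is word-representable if some word represents it. -/
def WordRepresentable [DecidableEq V] (G : SimpleGraph V) : Prop :=
  ∃ w : List V, Represents G w

/-- A word is uniform if every letter occurring in it occurs the same number of times. -/
def Uniform [DecidableEq V] (w : List V) : Prop :=
  ∀ x y : V, x ∈ w → y ∈ w → w.count x = w.count y

/-- `o` is an orientation of `G`: every oriented pair is an edge, and every edge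
gets exactly one of its two directions. -/
def IsOrientationOf (G : SimpleGraph V) (o : V → V → Prop) : Prop :=
  (∀ x y : V, o x y → G.Adj x y) ∧ ∀ x y : V, G.Adj x y → (o x y ↔ ¬ o y x)

/-- A relation is acyclic if it has no directed cycle. -/
def Acyclic (o : V → V → Prop) : Prop :=
  ∀ v : V, ¬ Relation.TransGen o v v

/-- An orientation of `G` is semi-transitive if it is acyclic and for every
directed path `p 0 → p 1 → ⋯ → p k` whose endpoints are adjacent in `G`,
all the edges `p i → p j` (`i < j`) are present and oriented forwards. -/
def SemiTransitive (G : SimpleGraph V) (o : V → V → Prop) : Prop :=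
  IsOrientationOf G o ∧ Acyclic o ∧
    ∀ (k : ℕ) (p : Fin (k + 1) → V),
      (∀ i : Fin k, o (p i.castSucc) (p i.succ)) →
      G.Adj (p 0) (p (Fin.last k)) →
      ∀ i j : Fin (k + 1), i < j → o (p i) (p j)

section Aux
variable [DecidableEq V]

def P (w : List V) (x y : V) : Prop :=
  ∀ n : ℕ, (w.take n).count y ≤ (w.take n).count x ∧
    (w.take n).count x ≤ (w.take n).count y + 1

lemma P_nil (x y : V) : P ([] : List V) x y := by
  intro n; simp [P]

lemma P_cons_other {a x y : V} (hax : a ≠ x) (hay : a ≠ y) (t : List V) :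
    P (a :: t) x y ↔ P t x y := by
  have hx := Ne.symm hax
  have hy := Ne.symm hay
  constructor
  · intro h n
    have := h (n + 1)
    simpa [List.take_succ_cons, List.count_cons, hx, hy, hax, hay] using this
  · intro h n
    cases n with
    | zero => simp
    | succ m =>
      have := h m
      simpa [List.take_succ_cons, List.count_cons, hx, hy, hax, hay] using this

lemma P_cons_self {x y : V} (hxy : x ≠ y) (t : List V) :
    P (x :: t) x y ↔ P t y x := by
  have hy := Ne.symm hxy
  constructor
  · intro h n
    have := h (n + 1)
    simp [List.take_succ_cons, List.count_cons, hy, hxy] at this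
    exact ⟨by omega, by omega⟩
  · intro h n
    cases n with
    | zero => simp
    | succ m =>
      have := h m
      simp [List.take_succ_cons, List.count_cons, hy, hxy]
      omega

lemma P_cons_bad {x y : V} (hxy : x ≠ y) (t : List V) :
    ¬ P (y :: t) x y := by
  intro h
  have := h 1
  simp [List.count_cons, hxy, Ne.symm hxy] at this

lemma filter_comm (x y : V) (w : List V) :
    (w.filter fun z => decide (z = x ∨ z = y)) =
    (w.filter fun z => decide (z = y ∨ z = x)) := by
  apply List.filter_congr
  intro z _
  exact decide_eq_decide.mpr or_comm

lemma P_of_not_mem {x y : V} {t : List V} (hx : x ∉ t) (hy : y ∉ t) : P t x y := by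
  intro n
  have hx' : (t.take n).count x = 0 :=
    List.count_eq_zero.mpr fun h => hx (List.take_subset n t h)
  have hy' : (t.take n).count y = 0 :=
    List.count_eq_zero.mpr fun h => hy (List.take_subset n t h)
  omega

lemma chain_of_P : ∀ (w : List V) (x y : V), x ≠ y → P w x y →
    List.Chain' (· ≠ ·) (y :: w.filter fun z => decide (z = x ∨ z = y)) := by
  intro w
  induction w with
  | nil => intro x y _ _; exact List.isChain_singleton y
  | cons a t ih =>
    intro x y hxy h
    by_cases hax : a = x
    · subst hax
      rw [show (List.filter (fun z => decide (z = a ∨ z = y)) (a :: t)) =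
          a :: t.filter fun z => decide (z = a ∨ z = y) from by simp]
      refine List.isChain_cons_cons.mpr ⟨Ne.symm hxy, ?_⟩
      have h' : P t y a := (P_cons_self hxy t).mp h
      have := ih y a (Ne.symm hxy) h'
      rwa [filter_comm] at this
    · by_cases hay : a = y
      · subst hay
        exact absurd h (P_cons_bad hxy t)
      · rw [show (List.filter (fun z => decide (z = x ∨ z = y)) (a :: t)) =
            t.filter fun z => decide (z = x ∨ z = y) from by simp [hax, hay]]
        exact ih x y hxy ((P_cons_other hax hay t).mp h)

lemma head_eq_of_P : ∀ (w : List V) (x y b : V), x ≠ y → P w x y →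
    (w.filter fun z => decide (z = x ∨ z = y)).head? = some b → b = x := by
  intro w
  induction w with
  | nil => intro x y b _ _ hb; simp at hb
  | cons a t ih =>
    intro x y b hxy h hb
    by_cases hax : a = x
    · subst hax
      rw [show (List.filter (fun z => decide (z = a ∨ z = y)) (a :: t)) =
          a :: t.filter fun z => decide (z = a ∨ z = y) from by simp] at hb
      simp at hb
      exact hb.symm
    · by_cases hay : a = y
      · subst hay
        exact absurd h (P_cons_bad hxy t)
      · rw [show (List.filter (fun z => decide (z = x ∨ z = y)) (a :: t)) =
            t.filter fun z => decide (z = x ∨ z = y) from by simp [hax, hay]] at hb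
        exact ih x y b hxy ((P_cons_other hax hay t).mp h) hb


lemma P_of_chain : ∀ (w : List V) (x y : V), x ≠ y →
    List.Chain' (· ≠ ·) (w.filter fun z => decide (z = x ∨ z = y)) →
    P w x y ∨ P w y x := by
  intro w
  induction w with
  | nil => intro x y _ _; exact Or.inl (P_nil x y)
  | cons a t ih =>
    intro x y hxy hc
    by_cases hax : a = x
    · subst hax
      rw [show (List.filter (fun z => decide (z = a ∨ z = y)) (a :: t)) =
          a :: t.filter fun z => decide (z = a ∨ z = y) from by simp] at hc
      rw [List.Chain', List.isChain_cons] at hc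
      obtain ⟨hhead, hc⟩ := hc
      left
      rw [P_cons_self hxy]
      rcases ih a y hxy hc with h | h
      · -- P t a y; show P t y a
        cases hf : (t.filter fun z => decide (z = a ∨ z = y)).head? with
        | none =>
          have hfil : (t.filter fun z => decide (z = a ∨ z = y)) = [] :=
            List.head?_eq_none_iff.mp hf
          rw [List.filter_eq_nil_iff] at hfil
          have hxm : a ∉ t := fun hm => by simpa using hfil a hm
          have hym : y ∉ t := fun hm => by simpa using hfil y hm
          exact P_of_not_mem hym hxm
        | some b =>
          have hb : b = a := head_eq_of_P t a y b hxy h hf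
          exact absurd hb.symm (hhead b hf)
      · exact h
    · by_cases hay : a = y
      · subst hay
        rw [show (List.filter (fun z => decide (z = x ∨ z = a)) (a :: t)) =
            a :: t.filter fun z => decide (z = x ∨ z = a) from by simp] at hc
        rw [List.Chain', List.isChain_cons] at hc
        obtain ⟨hhead, hc⟩ := hc
        right
        rw [P_cons_self (Ne.symm hxy)]
        rcases ih x a hxy hc with h | h
        · exact h
        · cases hf : (t.filter fun z => decide (z = x ∨ z = a)).head? with
          | none =>
            have hfil : (t.filter fun z => decide (z = x ∨ z = a)) = [] :=
              List.head?_eq_none_iff.mp hf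
            rw [List.filter_eq_nil_iff] at hfil
            have hxm : x ∉ t := fun hm => by simpa using hfil x hm
            have hym : a ∉ t := fun hm => by simpa using hfil a hm
            exact P_of_not_mem hxm hym
          | some b =>
            rw [filter_comm] at hf
            have hb : b = a := head_eq_of_P t a x b (Ne.symm hxy) h hf
            rw [← filter_comm] at hf
            exact absurd hb.symm (hhead b hf)
      · rw [show (List.filter (fun z => decide (z = x ∨ z = y)) (a :: t)) =
            t.filter fun z => decide (z = x ∨ z = y) from by simp [hax, hay]] at hc
        rcases ih x y hxy hc with h | h
        · exact Or.inl ((P_cons_other hax hay t).mpr h)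
        · exact Or.inr ((P_cons_other hay hax t).mpr h)

lemma alternates_iff {x y : V} (hxy : x ≠ y) (w : List V) :
    Alternates w x y ↔ (P w x y ∨ P w y x) := by
  constructor
  · exact P_of_chain w x y hxy
  · rintro (h | h)
    · exact (chain_of_P w x y hxy h).tail
    · have := (chain_of_P w y x (Ne.symm hxy) h).tail
      unfold Alternates
      rwa [filter_comm]

lemma mem_take_indexOf {x : V} : ∀ {w : List V}, x ∈ w → x ∈ w.take (w.idxOf x + 1) := by
  intro w
  induction w with
  | nil => intro h; simp at h
  | cons a t ih =>
    intro h
    by_cases hax : x = a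
    · subst hax; simp
    · rw [List.idxOf_cons_ne t (Ne.symm hax)]
      rw [List.take_succ_cons]
      rcases List.mem_cons.mp h with h' | h'
      · exact absurd h' hax
      · exact List.mem_cons_of_mem a (ih h')

lemma indexOf_lt_of_mem_take {x : V} : ∀ {w : List V} {n : ℕ}, x ∈ w.take n → w.idxOf x < n := by
  intro w
  induction w with
  | nil => intro n h; simp at h
  | cons a t ih =>
    intro n h
    cases n with
    | zero => simp at h
    | succ m =>
      rw [List.take_succ_cons] at h
      by_cases hax : x = a
      · subst hax; simp
      · rw [List.idxOf_cons_ne t (Ne.symm hax)]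
        rcases List.mem_cons.mp h with h' | h'
        · exact absurd h' hax
        · exact Nat.succ_lt_succ (ih h')

lemma indexOf_le_of_P {x y : V} {w : List V} (h : P w y x) (hx : x ∈ w) :
    w.idxOf y ≤ w.idxOf x := by
  have h1 : x ∈ w.take (w.idxOf x + 1) := mem_take_indexOf hx
  have h2 : 0 < (w.take (w.idxOf x + 1)).count x := List.count_pos_iff.mpr h1
  have h3 := (h (w.idxOf x + 1)).1
  have h4 : 0 < (w.take (w.idxOf x + 1)).count y := by omega
  have h5 : y ∈ w.take (w.idxOf x + 1) := List.count_pos_iff.mp h4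
  have := indexOf_lt_of_mem_take h5
  omega

lemma P_of_alternates {x y : V} {w : List V} (hxy : x ≠ y) (hx : x ∈ w)
    (halt : Alternates w x y) (hlt : w.idxOf x < w.idxOf y) : P w x y := by
  rcases (alternates_iff hxy w).mp halt with h | h
  · exact h
  · exact absurd hlt (not_lt.mpr (indexOf_le_of_P h hx))


end Aux

/-- Orienting each edge of `G` from the letter whose leftmost occurrence in a
representing word `w` comes first yields a semi-transitive orientation, in which
the first letter of `w` is a source. -/
theorem leftmost_orientation_semiTransitive [Fintype V] [DecidableEq V]
    (G : SimpleGraph V) (w : List V) (hw : Represents G w) :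
    SemiTransitive G (fun x y => G.Adj x y ∧ w.idxOf x < w.idxOf y) ∧
    ∀ (h : w ≠ []) (u : V), G.Adj (w.head h) u →
      w.idxOf (w.head h) < w.idxOf u := by
  obtain ⟨hmem, hiff⟩ := hw
  constructor
  · refine ⟨⟨fun x y h => h.1, ?_⟩, ?_, ?_⟩
    · intro x y hadj
      constructor
      · rintro ⟨_, hlt⟩ ⟨_, hlt'⟩
        omega
      · intro hn
        refine ⟨hadj, ?_⟩
        rcases lt_trichotomy (w.idxOf x) (w.idxOf y) with h | h | h
        · exact h
        · exact absurd ((List.idxOf_inj (hmem x)).mp h) hadj.ne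
        · exact absurd ⟨hadj.symm, h⟩ hn
    · intro v hv
      have h2 : Relation.TransGen (fun a b : V => w.idxOf a < w.idxOf b) v v :=
        Relation.TransGen.mono (r := fun x y => G.Adj x y ∧ w.idxOf x < w.idxOf y) (fun a b h => h.2) v v hv
      have h3 := Relation.transGen_eq_self
        (r := fun a b : V => w.idxOf a < w.idxOf b)
      rw [h3] at h2
      exact lt_irrefl _ h2
    · intro k p hchain hadj i j hij
      rcases Nat.eq_zero_or_pos k with hk | hk
      · subst hk
        have hj := j.isLt
        rw [Fin.lt_def] at hij
        omega
      · have hmono : StrictMono (fun i : Fin (k+1) => w.idxOf (p i)) :=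
          Fin.strictMono_iff_lt_succ.mpr (fun i => (hchain i).2)
        have hPstep : ∀ i : Fin k, P w (p i.castSucc) (p i.succ) := by
          intro i
          have hadj' := (hchain i).1
          have hne := hadj'.ne
          have halt := (hiff _ _ hne).mpr hadj'
          exact P_of_alternates hne (hmem _) halt (hchain i).2
        have hanti : ∀ n : ℕ, Antitone (fun i : Fin (k+1) => (w.take n).count (p i)) := by
          intro n
          exact Fin.antitone_iff_succ_le.mpr (fun i => (hPstep i n).1)
        have h0last : (0 : Fin (k+1)) < Fin.last k := by
          rw [Fin.lt_iff_val_lt_val]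
          simpa using hk
        have hPend : P w (p 0) (p (Fin.last k)) :=
          P_of_alternates hadj.ne (hmem _) ((hiff _ _ hadj.ne).mpr hadj) (hmono h0last)
        have hlt' : w.idxOf (p i) < w.idxOf (p j) := hmono hij
        have hneij : p i ≠ p j := fun hEq => by
          rw [hEq] at hlt'
          exact lt_irrefl _ hlt' 
        have hPij : P w (p i) (p j) := by
          intro n
          have h1 := hanti n hij.le
          have h2 := hanti n (Fin.zero_le i)
          have h3 := (hPend n).2
          have h4 := hanti n (Fin.le_last j)
          simp only at h1 h2 h4
          exact ⟨h1, by omega⟩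
        have halt : Alternates w (p i) (p j) := (alternates_iff hneij w).mpr (Or.inl hPij)
        exact ⟨(hiff _ _ hneij).mp halt, hlt'⟩
  · intro h u hadj
    cases w with
    | nil => exact absurd rfl h
    | cons a t =>
      simp only [List.head_cons] at hadj ⊢
      rw [List.idxOf_cons_self, List.idxOf_cons_ne t hadj.ne]
      omega


end WordRepr
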